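/- Let s = (s_i) be any binary sequence of period N, S(x) = Σ_{i=0}^{N−1} s_i x^i ∈ ℤ[x], ω_N = e^{2πi/N}, and let A = (a_{i,j}) be the N×N matrix over ℚ with a_{i,j} = s_{(i−j) mod N}. Then (1) det(A) = ∏_{a=0}^{N−1} S(ω_N^a), and (2) if det(A) ≠ 0, then gcd(S(2), 2^N − 1) divides gcd(det(A), 2^N − 1). -/

import Mathlib

lemma pow_mod_eq_pow {R : Type*} [Monoid R] (z : R) (N : ℕ) (hz : z ^ N = 1) (m : ℕ) :
    z ^ (m % N) = z ^ m := by
  conv_rhs => rw [← Nat.div_add_mod m N, pow_add, pow_mul, hz, one_pow, one_mul]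

lemma key_sum {R : Type*} [CommRing R] (N : ℕ) (hN : 0 < N) (s : ℕ → ℕ) (z : R)
    (hz : z ^ N = 1) (j : Fin N) :
    ∑ i : Fin N, z ^ (i : ℕ) * (s (((i : ℕ) + (N - (j : ℕ))) % N) : R) =
      (∑ k ∈ Finset.range N, (s k : R) * z ^ k) * z ^ (j : ℕ) := by
  haveI : NeZero N := ⟨hN.ne'⟩
  rw [← Fin.sum_univ_eq_sum_range (fun k => (s k : R) * z ^ k), Finset.sum_mul]
  refine Fintype.sum_equiv (Equiv.subRight j) _ _ fun k => ?_
  have hsub : ((k - j : Fin N) : ℕ) = ((k : ℕ) + (N - (j : ℕ))) % N := by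
    rw [Fin.sub_def]
    simp [Nat.add_comm]
  simp only [Equiv.subRight_apply, hsub]
  set m : ℕ := ((k : ℕ) + (N - (j : ℕ))) % N with hm
  have hmj : (m + (j : ℕ)) % N = (k : ℕ) := by
    rw [hm, Nat.mod_add_mod]
    have h1 : (k : ℕ) + (N - (j : ℕ)) + (j : ℕ) = (k : ℕ) + N := by
      have := j.isLt; omega
    rw [h1, Nat.add_mod_right, Nat.mod_eq_of_lt k.isLt]
  have : z ^ m * z ^ (j : ℕ) = z ^ (k : ℕ) := by
    rw [← pow_add, ← pow_mod_eq_pow z N hz (m + (j : ℕ)), hmj]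
  calc z ^ (k : ℕ) * (s m : R) = (s m : R) * (z ^ m * z ^ (j : ℕ)) := by rw [this]; ring
    _ = (s m : R) * z ^ m * z ^ (j : ℕ) := by ring

theorem circulant_det_and_gcd
    (N : ℕ) (hN : 0 < N)
    (s : ℕ → ℕ) (hs01 : ∀ i, s i = 0 ∨ s i = 1) (hper : ∀ i, s (i + N) = s i)
    (ω : ℂ) (hω : ω = Complex.exp (2 * Real.pi * Complex.I / N))
    (A : Matrix (Fin N) (Fin N) ℤ)
    (hA : ∀ i j : Fin N, A i j = s (((i : ℕ) + (N - (j : ℕ))) % N)) :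
    ((A.det : ℂ) = ∏ a ∈ Finset.range N, ∑ i ∈ Finset.range N, (s i : ℂ) * (ω ^ a) ^ i) ∧
      (A.det ≠ 0 →
        Int.gcd (∑ i ∈ Finset.range N, (s i : ℤ) * 2 ^ i) (2 ^ N - 1) ∣
          Int.gcd A.det (2 ^ N - 1)) := by
  constructor
  · -- Part 1
    have hprim : IsPrimitiveRoot ω N := hω ▸ Complex.isPrimitiveRoot_exp N hN.ne'
    have hωN : ω ^ N = 1 := hprim.pow_eq_one
    set V : Matrix (Fin N) (Fin N) ℂ := Matrix.vandermonde (fun a : Fin N => ω ^ (a : ℕ)) with hV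
    set Aℂ : Matrix (Fin N) (Fin N) ℂ := A.map (Int.cast : ℤ → ℂ) with hAC
    set D : Matrix (Fin N) (Fin N) ℂ :=
      Matrix.diagonal (fun a : Fin N => ∑ i ∈ Finset.range N, (s i : ℂ) * (ω ^ (a : ℕ)) ^ i) with hD
    have hM : V * Aℂ = D * V := by
      ext a j
      rw [Matrix.mul_apply, Matrix.diagonal_mul]
      have hz : (ω ^ (a : ℕ)) ^ N = 1 := by rw [← pow_mul, mul_comm, pow_mul, hωN, one_pow]
      have := key_sum N hN s (ω ^ (a : ℕ)) hz j
      simp only [hV, hAC, Matrix.vandermonde, Matrix.map_apply, Matrix.of_apply, hA,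
        Int.cast_natCast]
      exact this
    have hdetV : V.det ≠ 0 := by
      rw [hV, Matrix.det_vandermonde]
      refine Finset.prod_ne_zero_iff.2 fun i _ => Finset.prod_ne_zero_iff.2 fun j hj => ?_
      rw [Finset.mem_Ioi] at hj
      refine sub_ne_zero_of_ne fun h => ?_
      have := hprim.pow_inj j.isLt i.isLt h
      have hlt : (i : ℕ) < (j : ℕ) := hj
      omega
    have hdet : V.det * Aℂ.det = D.det * V.det := by
      rw [← Matrix.det_mul, ← Matrix.det_mul, hM]
    have hAdet : Aℂ.det = D.det := by
      rw [mul_comm] at hdet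
      exact mul_right_cancel₀ hdetV hdet
    have hcast : (A.det : ℂ) = Aℂ.det := by
      rw [hAC]
      exact RingHom.map_det (Int.castRingHom ℂ) A
    rw [hcast, hAdet, hD, Matrix.det_diagonal]
    exact Fin.prod_univ_eq_prod_range
      (fun a => ∑ i ∈ Finset.range N, (s i : ℂ) * (ω ^ a) ^ i) N
  · -- Part 2
    intro _
    haveI : NeZero N := ⟨hN.ne'⟩
    set S2 : ℤ := ∑ i ∈ Finset.range N, (s i : ℤ) * 2 ^ i with hS2
    set d : ℕ := Int.gcd S2 (2 ^ N - 1) with hd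
    have hd2 : (d : ℤ) ∣ 2 ^ N - 1 := Int.gcd_dvd_right _ _
    have hdS : (d : ℤ) ∣ S2 := Int.gcd_dvd_left _ _
    have h2N : (2 : ZMod d) ^ N = 1 := by
      have : ((2 ^ N - 1 : ℤ) : ZMod d) = 0 := (ZMod.intCast_zmod_eq_zero_iff_dvd _ _).2 hd2
      push_cast at this
      linear_combination this
    have hS0 : (∑ k ∈ Finset.range N, (s k : ZMod d) * 2 ^ k) = 0 := by
      have : ((S2 : ℤ) : ZMod d) = 0 := (ZMod.intCast_zmod_eq_zero_iff_dvd _ _).2 hdS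
      rw [hS2] at this
      push_cast at this
      exact this
    set B : Matrix (Fin N) (Fin N) (ZMod d) := A.map (Int.cast : ℤ → ZMod d) with hB
    set v : Fin N → ZMod d := fun j => 2 ^ (j : ℕ) with hv
    have hvB : Matrix.vecMul v B = 0 := by
      funext j
      rw [Matrix.vecMul, dotProduct]
      have hks := key_sum N hN s (2 : ZMod d) h2N j
      calc ∑ i : Fin N, v i * B i j
          = ∑ i : Fin N, (2 : ZMod d) ^ (i : ℕ) *
              (s (((i : ℕ) + (N - (j : ℕ))) % N) : ZMod d) := by
            refine Finset.sum_congr rfl fun i _ => ?_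
            simp [hv, hB, Matrix.map_apply, hA]
        _ = (∑ k ∈ Finset.range N, (s k : ZMod d) * 2 ^ k) * 2 ^ (j : ℕ) := hks
        _ = 0 := by rw [hS0, zero_mul]
    have hdet0 : B.det = 0 := by
      have h1 : Matrix.vecMul v (B * B.adjugate) = B.det • v := by
        rw [Matrix.mul_adjugate]
        funext j
        simp [Matrix.vecMul, dotProduct, Matrix.one_apply, mul_ite,
          Finset.sum_ite_eq, mul_comm]
      rw [← Matrix.vecMul_vecMul, hvB, Matrix.zero_vecMul] at h1
      have h2 := congrFun h1 ⟨0, hN⟩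
      simp only [Pi.zero_apply, Pi.smul_apply, smul_eq_mul, hv] at h2
      simpa using h2.symm
    have hAd : ((A.det : ℤ) : ZMod d) = 0 := by
      have hmap : A.map (Int.cast : ℤ → ZMod d) = A.map ⇑(Int.castRingHom (ZMod d)) := rfl
      rw [hB, hmap] at hdet0
      exact (RingHom.map_det (Int.castRingHom (ZMod d)) A).trans hdet0
    have hdvd : (d : ℤ) ∣ A.det := (ZMod.intCast_zmod_eq_zero_iff_dvd _ _).1 hAd
    have hfin : (d : ℤ) ∣ (Int.gcd A.det (2 ^ N - 1) : ℤ) := Int.dvd_coe_gcd hdvd hd2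
    exact_mod_cast hfin
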